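/- Let b, ζ, α₀, λ ∈ ℝ with ζ + b·cos(α₀) ≠ 0, and set β(s) = (ζ + b cos α₀)s + λ. Define x, y, z : ℝ → ℝ by x(s) = (sin α₀/(ζ + b cos α₀))·(sin β(s) − sin λ), y(s) = (−sin α₀/(ζ + b cos α₀))·(cos β(s) − cos λ), and z(s) = ((2ζ + b cos α₀)cos α₀ + b)/(2(ζ + b cos α₀))·s + (b sin²α₀/(2(ζ + b cos α₀)²))·(sin λ · cos β(s) − cos λ · sin β(s)). Then x(0) = y(0) = z(0) = 0 and for all s ∈ ℝ: x'(s) = sin α₀ · cos β(s), y'(s) = sin α₀ · sin β(s), and z'(s) = cos α₀ + (b/2)·sin α₀·(x(s)·sin β(s) − y(s)·cos β(s)). -/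

import Mathlib

/-- The explicit parametrization of triharmonic helices in the Heisenberg group starts
at the origin and solves the Frenet ODE system `x' = sin α₀ cos β`, `y' = sin α₀ sin β`,
`z' = cos α₀ + (b/2) sin α₀ (x sin β − y cos β)`. -/
theorem stmt_14 (b ζ α₀ lam : ℝ) (h : ζ + b * Real.cos α₀ ≠ 0)
    (β x y z : ℝ → ℝ)
    (hβ : ∀ s, β s = (ζ + b * Real.cos α₀) * s + lam)
    (hx : ∀ s, x s = Real.sin α₀ / (ζ + b * Real.cos α₀) * (Real.sin (β s) - Real.sin lam))
    (hy : ∀ s, y s = -Real.sin α₀ / (ζ + b * Real.cos α₀) * (Real.cos (β s) - Real.cos lam))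
    (hz : ∀ s, z s =
      ((2 * ζ + b * Real.cos α₀) * Real.cos α₀ + b) / (2 * (ζ + b * Real.cos α₀)) * s
        + b * Real.sin α₀ ^ 2 / (2 * (ζ + b * Real.cos α₀) ^ 2)
          * (Real.sin lam * Real.cos (β s) - Real.cos lam * Real.sin (β s))) :
    x 0 = 0 ∧ y 0 = 0 ∧ z 0 = 0 ∧
    ∀ s : ℝ,
      deriv x s = Real.sin α₀ * Real.cos (β s) ∧
      deriv y s = Real.sin α₀ * Real.sin (β s) ∧
      deriv z s = Real.cos α₀
        + b / 2 * Real.sin α₀ * (x s * Real.sin (β s) - y s * Real.cos (β s)) := by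
  set c := ζ + b * Real.cos α₀ with hc
  have hxeq : x = fun s => Real.sin α₀ / c * (Real.sin (c * s + lam) - Real.sin lam) := by
    funext s; rw [hx s, hβ s]
  have hyeq : y = fun s => -Real.sin α₀ / c * (Real.cos (c * s + lam) - Real.cos lam) := by
    funext s; rw [hy s, hβ s]
  have hzeq : z = fun s =>
      ((2 * ζ + b * Real.cos α₀) * Real.cos α₀ + b) / (2 * c) * s
        + b * Real.sin α₀ ^ 2 / (2 * c ^ 2)
          * (Real.sin lam * Real.cos (c * s + lam) - Real.cos lam * Real.sin (c * s + lam)) := by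
    funext s; rw [hz s, hβ s]
  have hlin : ∀ s : ℝ, HasDerivAt (fun s : ℝ => c * s + lam) c s := by
    intro s
    simpa using ((hasDerivAt_id s).const_mul c).add_const lam
  have hsin : ∀ s : ℝ, HasDerivAt (fun s : ℝ => Real.sin (c * s + lam))
      (Real.cos (c * s + lam) * c) s := fun s =>
    by have := (Real.hasDerivAt_sin (c * s + lam)).comp s (hlin s); exact this
  have hcos : ∀ s : ℝ, HasDerivAt (fun s : ℝ => Real.cos (c * s + lam))
      (-Real.sin (c * s + lam) * c) s := fun s =>
    by have := (Real.hasDerivAt_cos (c * s + lam)).comp s (hlin s); exact this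
  have hdx : ∀ s : ℝ, deriv x s = Real.sin α₀ / c * (Real.cos (c * s + lam) * c) := by
    intro s; rw [hxeq]
    exact (((hsin s).sub_const (Real.sin lam)).const_mul (Real.sin α₀ / c)).deriv
  have hdy : ∀ s : ℝ, deriv y s = -Real.sin α₀ / c * (-Real.sin (c * s + lam) * c) := by
    intro s; rw [hyeq]
    exact (((hcos s).sub_const (Real.cos lam)).const_mul (-Real.sin α₀ / c)).deriv
  have hdz : ∀ s : ℝ, deriv z s =
      ((2 * ζ + b * Real.cos α₀) * Real.cos α₀ + b) / (2 * c)
        + b * Real.sin α₀ ^ 2 / (2 * c ^ 2)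
          * (Real.sin lam * (-Real.sin (c * s + lam) * c)
            - Real.cos lam * (Real.cos (c * s + lam) * c)) := by
    intro s; rw [hzeq]
    have h1 : HasDerivAt (fun s : ℝ =>
        ((2 * ζ + b * Real.cos α₀) * Real.cos α₀ + b) / (2 * c) * s)
        (((2 * ζ + b * Real.cos α₀) * Real.cos α₀ + b) / (2 * c)) s := by
      simpa using (hasDerivAt_id s).const_mul
        (((2 * ζ + b * Real.cos α₀) * Real.cos α₀ + b) / (2 * c))
    have h2 : HasDerivAt (fun s : ℝ =>
        b * Real.sin α₀ ^ 2 / (2 * c ^ 2)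
          * (Real.sin lam * Real.cos (c * s + lam) - Real.cos lam * Real.sin (c * s + lam)))
        (b * Real.sin α₀ ^ 2 / (2 * c ^ 2)
          * (Real.sin lam * (-Real.sin (c * s + lam) * c)
            - Real.cos lam * (Real.cos (c * s + lam) * c))) s :=
      (((hcos s).const_mul (Real.sin lam)).sub
        ((hsin s).const_mul (Real.cos lam))).const_mul (b * Real.sin α₀ ^ 2 / (2 * c ^ 2))
    exact (h1.add h2).deriv
  refine ⟨?_, ?_, ?_, ?_⟩
  · rw [hx 0, hβ 0]; simp
  · rw [hy 0, hβ 0]; simp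
  · rw [hz 0, hβ 0]; ring_nf
  · intro s
    have hpyth := Real.sin_sq_add_cos_sq α₀
    refine ⟨?_, ?_, ?_⟩
    · rw [hdx s, hβ s]; field_simp
    · rw [hdy s, hβ s]; field_simp
    · rw [hdz s, hβ s, hx s, hy s, hβ s]
      field_simp
      linear_combination (-b) * hpyth
        + (-(b * Real.sin α₀ ^ 2)) * Real.sin_sq_add_cos_sq (c * s + lam) + (-2 * Real.cos α₀) * hc
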